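/- Let T > 0, let A : [0,T] → M_{2m}(ℝ) be a smooth map and B₁, …, B_k ∈ M_{2m}(ℝ), let S : [0,T] → M_{2m}(ℝ) be the solution of Ṡ(t) = A(t)S(t), S(0) = I_{2m}, and define B_i⁰(t) := B_i, B_i^j(t) := (d/dt)B_i^{j−1}(t) + B_i^{j−1}(t)A(t) − A(t)B_i^{j−1}(t). Let P ∈ M_{2m}(ℝ) be such that tr[ Pᵀ · S(T)·Σ_{i=1}^k ∫₀ᵀ v_i(t) S(t)⁻¹ B_i S(t) dt ] = 0 for every v ∈ L²([0,T]; ℝᵏ) (i.e. P is orthogonal, for the trace inner product, to the image of the differential at u ≡ 0 of the End-Point mapping). Then for every t ∈ [0,T], every j ≥ 0 and every i = 1, …, k, tr[ Pᵀ S(T) S(t)⁻¹ B_i^j(t) S(t) ] = 0. -/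

import Mathlib

open MeasureTheory Matrix
open Set

namespace Stmt5

/-- The space `M_{2m}(ℝ)`, with indices `Fin m ⊕ Fin m`. -/
abbrev Mat (m : ℕ) := Matrix (Fin m ⊕ Fin m) (Fin m ⊕ Fin m) ℝ

/-- `B⁰(t) := B`, `B^{j+1}(t) := (d/dt)B^j(t) + B^j(t)A(t) − A(t)B^j(t)`,
derivatives taken within `[0,T]`. -/
noncomputable def Bseq {m : ℕ} (T : ℝ) (A : ℝ → Mat m) (B : Mat m) : ℕ → ℝ → Mat m
  | 0, _ => B
  | j + 1, t =>
      (Matrix.of fun a b => derivWithin (fun r => Bseq T A B j r a b) (Set.Icc 0 T) t)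
        + (Bseq T A B j t * A t - A t * Bseq T A B j t)

attribute [local instance] Matrix.linftyOpNormedRing Matrix.linftyOpNormedAlgebra

/-! ### Entrywise/matrix derivative bridging -/

theorem hasDerivWithinAt_mat {m : ℕ} {X : ℝ → Mat m} {X' : Mat m} {s : Set ℝ} {t : ℝ}
    (h : ∀ a b, HasDerivWithinAt (fun r => X r a b) (X' a b) s t) :
    HasDerivWithinAt X X' s t := by
  have h1 : HasDerivWithinAt
      (fun r => ∑ a : Fin m ⊕ Fin m, ∑ b : Fin m ⊕ Fin m,
        X r a b • (Matrix.single a b (1:ℝ)))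
      (∑ a : Fin m ⊕ Fin m, ∑ b : Fin m ⊕ Fin m, X' a b • Matrix.single a b (1:ℝ)) s t :=
    HasDerivWithinAt.fun_sum fun a _ => HasDerivWithinAt.fun_sum fun b _ => (h a b).smul_const _
  have e : ∀ Y : Mat m, ∑ a : Fin m ⊕ Fin m, ∑ b : Fin m ⊕ Fin m,
      Y a b • Matrix.single a b (1:ℝ) = Y := by
    intro Y
    simp_rw [smul_single, smul_eq_mul, mul_one]
    exact (matrix_eq_sum_single Y).symm
  simp only [e] at h1
  exact h1

noncomputable def entryCLM (m : ℕ) (a b : Fin m ⊕ Fin m) : Mat m →L[ℝ] ℝ :=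
  LinearMap.toContinuousLinearMap
    { toFun := fun X => X a b
      map_add' := fun _ _ => rfl
      map_smul' := fun _ _ => rfl }

theorem hasDerivWithinAt_entry {m : ℕ} {X : ℝ → Mat m} {X' : Mat m} {s : Set ℝ} {t : ℝ}
    (h : HasDerivWithinAt X X' s t) (a b : Fin m ⊕ Fin m) :
    HasDerivWithinAt (fun r => X r a b) (X' a b) s t :=
  ((entryCLM m a b).hasFDerivAt.comp_hasDerivWithinAt t h :)

/-! ### Derivative of the determinant along a path -/

theorem hasDerivWithinAt_det {m : ℕ} {M : ℝ → Mat m} {M' : Mat m} {s : Set ℝ} {t : ℝ}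
    (h : ∀ a b, HasDerivWithinAt (fun r => M r a b) (M' a b) s t) :
    HasDerivWithinAt (fun r => (M r).det)
      (∑ k, ((M t).updateCol k (fun r => M' r k)).det) s t := by
  have h1 : HasDerivWithinAt (fun r => ∑ σ : Equiv.Perm (Fin m ⊕ Fin m),
      ((Equiv.Perm.sign σ : ℤ) : ℝ) * ∏ i, M r (σ i) i)
      (∑ σ : Equiv.Perm (Fin m ⊕ Fin m), ((Equiv.Perm.sign σ : ℤ) : ℝ) *
        ∑ k, (∏ j ∈ Finset.univ.erase k, M t (σ j) j) • M' (σ k) k) s t :=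
    HasDerivWithinAt.fun_sum fun σ _ =>
      (HasDerivWithinAt.fun_finsetProd fun i _ => h (σ i) i).const_mul _
  convert h1 using 1
  · funext r
    exact Matrix.det_apply' (M r)
  · have key : ∀ k, ((M t).updateCol k (fun r => M' r k)).det
        = ∑ σ : Equiv.Perm (Fin m ⊕ Fin m), ((Equiv.Perm.sign σ : ℤ) : ℝ) *
            ((∏ j ∈ Finset.univ.erase k, M t (σ j) j) * M' (σ k) k) := by
      intro k
      rw [Matrix.det_apply']
      refine Finset.sum_congr rfl fun σ _ => ?_
      congr 1
      rw [← Finset.mul_prod_erase Finset.univ _ (Finset.mem_univ k), mul_comm]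
      congr 1
      · exact Finset.prod_congr rfl fun j hj => by
          rw [Matrix.updateCol_apply, if_neg (Finset.mem_erase.1 hj).1]
      · rw [Matrix.updateCol_apply, if_pos rfl]
    simp_rw [key, Finset.mul_sum, smul_eq_mul]
    rw [Finset.sum_comm]

theorem hasDerivWithinAt_det_row {m : ℕ} {M : ℝ → Mat m} {M' : Mat m} {s : Set ℝ} {t : ℝ}
    (h : ∀ a b, HasDerivWithinAt (fun r => M r a b) (M' a b) s t) :
    HasDerivWithinAt (fun r => (M r).det)
      (∑ k, ((M t).updateRow k (M' k)).det) s t := by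
  have h' : ∀ a b, HasDerivWithinAt (fun r => (M r)ᵀ a b) (M'ᵀ a b) s t := fun a b => h b a
  have h2 := hasDerivWithinAt_det (M := fun r => (M r)ᵀ) (M' := M'ᵀ) h'
  simp_rw [Matrix.det_transpose] at h2
  convert h2 using 1
  refine Finset.sum_congr rfl fun k _ => ?_
  rw [← Matrix.det_transpose, Matrix.updateCol_transpose]
  rfl

theorem sum_det_updateRow_mul {m : ℕ} (A S : Mat m) :
    ∑ k, (S.updateRow k ((A * S) k)).det = A.trace * S.det := by
  have hrow : ∀ k, (A * S) k = ∑ j, A k j • S j := by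
    intro k; funext b
    rw [Matrix.mul_apply, Finset.sum_apply]
    simp only [Pi.smul_apply, smul_eq_mul]
  simp_rw [hrow, Matrix.det_updateRow_sum, smul_eq_mul, ← Finset.sum_mul, Matrix.trace]
  rfl

/-! ### Liouville: the determinant of `S` never vanishes -/

theorem Icc_mem_nhdsWithin_Ici' {x T : ℝ} (hx : x ∈ Ico (0:ℝ) T) :
    Icc (0:ℝ) T ∈ nhdsWithin x (Ici x) := by
  rw [← nhdsWithin_Icc_eq_nhdsGE hx.2]
  exact Filter.mem_of_superset self_mem_nhdsWithin (Icc_subset_Icc hx.1 le_rfl)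

theorem det_ne_zero {m : ℕ} {T : ℝ} (hT : 0 < T) {A S : ℝ → Mat m}
    (hAc : ∀ a b, ContinuousOn (fun t => A t a b) (Icc 0 T))
    (hS0 : S 0 = 1)
    (hS : ∀ t ∈ Icc (0:ℝ) T, ∀ a b,
      HasDerivWithinAt (fun r => S r a b) ((A t * S t) a b) (Icc 0 T) t) :
    ∀ t ∈ Icc (0:ℝ) T, (S t).det ≠ 0 := by
  set trA : ℝ → ℝ := fun t => (A t).trace with htrA
  have hScont : ∀ a b, ContinuousOn (fun r => S r a b) (Icc 0 T) :=
    fun a b t ht => (hS t ht a b).continuousWithinAt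
  have htrAc : ContinuousOn trA (Icc 0 T) := by
    apply continuousOn_finset_sum
    intro i _
    exact hAc i i
  have hdetc : ContinuousOn (fun r => (S r).det) (Icc 0 T) := by
    have : (fun r => (S r).det) = fun r =>
        ∑ σ : Equiv.Perm (Fin m ⊕ Fin m),
          ((Equiv.Perm.sign σ : ℤ) : ℝ) * ∏ i, S r (σ i) i := by
      funext r; exact Matrix.det_apply' (S r)
    rw [this]
    apply continuousOn_finset_sum
    intro σ _
    exact continuousOn_const.mul
      (continuousOn_finset_prod Finset.univ (fun i _ => hScont (σ i) i))
  have hdS : ∀ t ∈ Icc (0:ℝ) T,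
      HasDerivWithinAt (fun r => (S r).det) (trA t * (S t).det) (Icc 0 T) t := by
    intro t ht
    have := hasDerivWithinAt_det_row (M := S) (M' := A t * S t) (s := Icc 0 T) (t := t)
      (hS t ht)
    rwa [sum_det_updateRow_mul] at this
  set c : ℝ → ℝ := fun x => ∫ s in (0:ℝ)..x, trA s with hc
  have hInt : ∀ x ∈ Icc (0:ℝ) T, IntervalIntegrable trA volume 0 x := by
    intro x hx
    apply ContinuousOn.intervalIntegrable
    rw [uIcc_of_le hx.1]
    exact htrAc.mono (Icc_subset_Icc le_rfl hx.2)
  have hdc : ∀ x ∈ Icc (0:ℝ) T, HasDerivWithinAt c (trA x) (Icc 0 T) x := by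
    intro x hx
    haveI : Fact (x ∈ Icc (0:ℝ) T) := ⟨hx⟩
    exact intervalIntegral.integral_hasDerivWithinAt_right (hInt x hx)
      ⟨Icc (0:ℝ) T, self_mem_nhdsWithin, htrAc.aestronglyMeasurable measurableSet_Icc⟩
      (htrAc x hx)
  have hcc : ContinuousOn c (Icc 0 T) := by
    have := intervalIntegral.continuousOn_primitive_interval
      (μ := volume) (f := trA) (a := 0) (b := T) ?_
    · rwa [uIcc_of_le hT.le] at this
    · rw [uIcc_of_le hT.le]
      exact htrAc.integrableOn_compact isCompact_Icc
  set z : ℝ → ℝ := fun x => (S x).det * Real.exp (-(c x)) with hz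
  have hzc : ContinuousOn z (Icc 0 T) :=
    hdetc.mul (Real.continuous_exp.comp_continuousOn (hcc.neg))
  have hzd : ∀ x ∈ Ico (0:ℝ) T, HasDerivWithinAt z 0 (Ici x) x := by
    intro x hx
    have hx' : x ∈ Icc (0:ℝ) T := ⟨hx.1, hx.2.le⟩
    have h1 : HasDerivWithinAt (fun r => (S r).det) (trA x * (S x).det) (Ici x) x :=
      (hdS x hx').mono_of_mem_nhdsWithin (Icc_mem_nhdsWithin_Ici' hx)
    have h2 : HasDerivWithinAt (fun r => Real.exp (-(c r)))
        (Real.exp (-(c x)) * (-(trA x))) (Ici x) x :=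
      (((hdc x hx').mono_of_mem_nhdsWithin (Icc_mem_nhdsWithin_Ici' hx)).neg).exp
    have := h1.mul h2
    refine this.congr_deriv ?_
    ring
  have hconst := constant_of_has_deriv_right_zero hzc hzd
  intro t ht hdet
  have h1 : z t = z 0 := hconst t ht
  have : z 0 = 1 := by
    simp [hz, hc, hS0, Matrix.det_one]
  rw [this] at h1
  rw [hz] at h1
  simp only [hdet, zero_mul] at h1
  exact zero_ne_one h1

/-! ### Derivative of the inverse -/

theorem inv_hasDeriv {m : ℕ} {T : ℝ} (hT : 0 < T) {A S : ℝ → Mat m}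
    (hU : ∀ t ∈ Icc (0:ℝ) T, IsUnit ((S t).det))
    (hSd : ∀ t ∈ Icc (0:ℝ) T, HasDerivWithinAt S (A t * S t) (Icc 0 T) t) :
    ∀ t ∈ Icc (0:ℝ) T, HasDerivWithinAt (fun r => (S r)⁻¹) (-((S t)⁻¹ * A t)) (Icc 0 T) t := by
  intro t ht
  have hdet := hU t ht
  have hUt : IsUnit (S t) := (Matrix.isUnit_iff_isUnit_det _).2 hdet
  have hdiff : DifferentiableWithinAt ℝ (fun r => Ring.inverse (S r)) (Icc (0:ℝ) T) t :=
    ((hSd t ht).differentiableWithinAt).inverse hUt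
  set g' := derivWithin (fun r => Ring.inverse (S r)) (Icc (0:ℝ) T) t with hg'
  have hG : HasDerivWithinAt (fun r => Ring.inverse (S r)) g' (Icc (0:ℝ) T) t :=
    hdiff.hasDerivWithinAt
  have hprod := (hSd t ht).mul hG
  have h2 : HasDerivWithinAt (fun r => S r * Ring.inverse (S r)) 0 (Icc (0:ℝ) T) t := by
    refine (hasDerivWithinAt_const t (Icc (0:ℝ) T) (1 : Mat m)).congr ?_ ?_
    · intro r hr
      rw [← Matrix.nonsing_inv_eq_ringInverse, Matrix.mul_nonsing_inv _ (hU r hr)]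
    · rw [← Matrix.nonsing_inv_eq_ringInverse, Matrix.mul_nonsing_inv _ hdet]
  have hud : UniqueDiffWithinAt ℝ (Icc (0:ℝ) T) t := uniqueDiffOn_Icc hT t ht
  have heq : A t * S t * Ring.inverse (S t) + S t * g' = 0 := by
    rw [← hprod.derivWithin hud, ← h2.derivWithin hud]
    rfl
  have e1 : S t * g' = -(A t * S t * Ring.inverse (S t)) :=
    eq_neg_of_add_eq_zero_left (by rw [add_comm]; exact heq)
  have hg : g' = -((S t)⁻¹ * A t) := by
    calc g' = (S t)⁻¹ * (S t * g') := by
          rw [← mul_assoc, Matrix.nonsing_inv_mul _ hdet, one_mul]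
      _ = (S t)⁻¹ * -(A t * (S t * Ring.inverse (S t))) := by rw [e1, mul_assoc]
      _ = -((S t)⁻¹ * A t) := by
          rw [← Matrix.nonsing_inv_eq_ringInverse, Matrix.mul_nonsing_inv _ hdet,
            mul_one, mul_neg]
  have : (fun r => (S r)⁻¹) = fun r => Ring.inverse (S r) := by
    funext r; rw [Matrix.nonsing_inv_eq_ringInverse]
  rw [this, ← hg]
  exact hG

/-! ### Vanishing of a continuous function with zero L² norm -/

theorem eq_zero_of_integral_sq {T : ℝ} (hT : 0 < T) {g : ℝ → ℝ}
    (hg : ContinuousOn g (Icc 0 T))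
    (hint : (∫ t in (0:ℝ)..T, g t * g t) = 0) : ∀ t ∈ Icc (0:ℝ) T, g t = 0 := by
  have hgg : IntegrableOn (fun t => g t * g t) (Ioc 0 T) volume :=
    ((hg.mul hg).integrableOn_compact isCompact_Icc).mono_set Ioc_subset_Icc_self
  rw [intervalIntegral.integral_of_le hT.le] at hint
  have h0 : (fun t => g t * g t) =ᵐ[volume.restrict (Ioc 0 T)] 0 :=
    (integral_eq_zero_iff_of_nonneg (fun t => mul_self_nonneg (g t)) hgg).1 hint
  have hnull : volume ({x | g x * g x ≠ 0} ∩ Ioc 0 T) = 0 := by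
    have := ae_iff.1 h0
    rwa [Measure.restrict_apply' measurableSet_Ioc] at this
  intro t ht
  by_contra habs
  have hgt : 0 < |g t| := abs_pos.2 habs
  obtain ⟨δ, hδ, hball⟩ := Metric.continuousWithinAt_iff.1 (hg t ht) (|g t| / 2) (by linarith)
  have key : ∀ s ∈ Icc (0:ℝ) T, dist s t < δ → g s ≠ 0 := by
    intro s hs hd hzero
    have := hball hs hd
    rw [hzero, Real.dist_eq, zero_sub, abs_neg] at this
    linarith
  obtain ⟨a, b, hab, hsub⟩ : ∃ a b : ℝ, a < b ∧ Ioc a b ⊆ {x | g x * g x ≠ 0} ∩ Ioc 0 T := by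
    rcases eq_or_lt_of_le ht.1 with h0t | h0t
    · refine ⟨0, min (δ/2) T, lt_min (by linarith) hT, fun s hs => ?_⟩
      have hsIoc : s ∈ Ioc (0:ℝ) T := ⟨hs.1, hs.2.trans (min_le_right _ _)⟩
      have hdist : dist s t < δ := by
        rw [Real.dist_eq, ← h0t, sub_zero, abs_of_pos hs.1]
        exact lt_of_le_of_lt (hs.2.trans (min_le_left _ _)) (by linarith)
      have := key s (Ioc_subset_Icc_self hsIoc) hdist
      exact ⟨by simpa [mul_self_eq_zero] using this, hsIoc⟩
    · refine ⟨max (t - δ/2) 0, t, max_lt (by linarith) h0t, fun s hs => ?_⟩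
      have hs0 : 0 < s := lt_of_le_of_lt (le_max_right _ _) hs.1
      have hsIoc : s ∈ Ioc (0:ℝ) T := ⟨hs0, hs.2.trans ht.2⟩
      have hdist : dist s t < δ := by
        rw [Real.dist_eq, abs_of_nonpos (by linarith [hs.2] : s - t ≤ 0)]
        have h5 : t - δ/2 ≤ max (t - δ/2) 0 := le_max_left _ _
        have h6 := hs.1
        simp only [neg_sub]
        linarith
      have := key s (Ioc_subset_Icc_self hsIoc) hdist
      exact ⟨by simpa [mul_self_eq_zero] using this, hsIoc⟩
  have h1 : volume (Ioc a b) ≤ 0 := hnull ▸ measure_mono hsub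
  rw [Real.volume_Ioc] at h1
  have : ENNReal.ofReal (b - a) = 0 := le_antisymm h1 zero_le
  rw [ENNReal.ofReal_eq_zero] at this
  linarith

/-! ### The base case -/

theorem trace_form {m : ℕ} (P X : Mat m) :
    Matrix.trace (Pᵀ * X) = ∑ a, ∑ b, P b a * X b a := by
  rw [Matrix.trace]
  simp [Matrix.diag, Matrix.mul_apply, Matrix.transpose_apply]

theorem hswap_lemma {m : ℕ} {T : ℝ} (P : Mat m) (ψ : ℝ → ℝ) (C : ℝ → Mat m)
    (htr : ∀ t, ψ t = ∑ a, ∑ b, P b a * C t b a)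
    (hint' : ∀ a b, IntervalIntegrable (fun t => ψ t * C t a b) volume 0 T) :
    (∫ t in (0:ℝ)..T, ψ t * ψ t) = ∑ a, ∑ b, P b a * ∫ t in (0:ℝ)..T, ψ t * C t b a := by
  have h1 : ∀ a : Fin m ⊕ Fin m,
      (∑ b, P b a * ∫ t in (0:ℝ)..T, ψ t * C t b a)
        = ∫ t in (0:ℝ)..T, ∑ b, P b a * (ψ t * C t b a) := by
    intro a
    have h2 := intervalIntegral.integral_finset_sum (μ := volume) (a := (0:ℝ)) (b := T)
      (s := Finset.univ) (f := fun b t => P b a * (ψ t * C t b a))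
      (fun b _ => (hint' b a).const_mul _)
    simp_rw [intervalIntegral.integral_const_mul] at h2
    exact h2.symm
  simp_rw [h1]
  have h3 := intervalIntegral.integral_finset_sum (μ := volume) (a := (0:ℝ)) (b := T)
    (s := Finset.univ) (f := fun a t => ∑ b, P b a * (ψ t * C t b a))
    (fun a _ => by
      have hh := IntervalIntegrable.sum (μ := volume) (a := (0:ℝ)) (b := T)
        (f := fun b t => P b a * (ψ t * C t b a)) Finset.univ
        (fun b _ => (hint' b a).const_mul _)
      simpa only [Finset.sum_fn] using hh)
  rw [← h3]
  apply intervalIntegral.integral_congr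
  intro t _
  calc ψ t * ψ t = ψ t * ∑ a, ∑ b, P b a * C t b a := by rw [← htr t]
    _ = ∑ a, ∑ b, P b a * (ψ t * C t b a) := by
        rw [Finset.mul_sum]
        refine Finset.sum_congr rfl fun a _ => ?_
        rw [Finset.mul_sum]
        exact Finset.sum_congr rfl fun b _ => by ring

theorem base_case {m k : ℕ} {T : ℝ} (hT : 0 < T) (P : Mat m) (C : Fin k → ℝ → Mat m)
    (hC : ∀ i a b, ContinuousOn (fun t => C i t a b) (Icc 0 T))
    (hP : ∀ v : ℝ → Fin k → ℝ, MemLp v 2 (volume.restrict (Set.Ioc 0 T)) →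
      Matrix.trace (Pᵀ *
        Matrix.of (fun a b => ∑ i, ∫ t in (0 : ℝ)..T, v t i * C i t a b)) = 0) :
    ∀ i, ∀ t ∈ Icc (0:ℝ) T, Matrix.trace (Pᵀ * C i t) = 0 := by
  intro i₀
  set ψ : ℝ → ℝ := fun t => Matrix.trace (Pᵀ * C i₀ t) with hψ
  have hψc : ContinuousOn ψ (Icc 0 T) := by
    have : ψ = fun t => ∑ a, ∑ b, P b a * C i₀ t b a := by
      funext t; exact trace_form P (C i₀ t)
    rw [this]
    exact continuousOn_finset_sum _ fun a _ => continuousOn_finset_sum _ fun b _ =>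
      continuousOn_const.mul (hC i₀ b a)
  set v : ℝ → Fin k → ℝ := fun t i => if i = i₀ then ψ t else 0 with hv
  obtain ⟨M, hM⟩ := IsCompact.exists_bound_of_continuousOn isCompact_Icc hψc
  have hMnonneg : 0 ≤ M := le_trans (norm_nonneg _) (hM 0 ⟨le_rfl, hT.le⟩)
  have hψm : AEStronglyMeasurable ψ (volume.restrict (Ioc 0 T)) :=
    (hψc.mono Ioc_subset_Icc_self).aestronglyMeasurable measurableSet_Ioc
  have hmeas : AEStronglyMeasurable v (volume.restrict (Ioc 0 T)) := by
    have hveq : v = fun t => ψ t • (fun i => if i = i₀ then (1:ℝ) else 0) := by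
      funext t i; by_cases hi : i = i₀ <;> simp [hv, hi]
    rw [hveq]
    exact hψm.smul_const _
  have hvmem : MemLp v 2 (volume.restrict (Set.Ioc 0 T)) := by
    haveI : IsFiniteMeasure (volume.restrict (Set.Ioc (0:ℝ) T)) := by
      constructor
      rw [Measure.restrict_apply_univ, Real.volume_Ioc]
      exact ENNReal.ofReal_lt_top
    refine MemLp.of_bound hmeas M ?_
    filter_upwards [ae_restrict_mem measurableSet_Ioc] with t ht
    rw [pi_norm_le_iff_of_nonneg hMnonneg]
    intro i
    by_cases hi : i = i₀
    · subst hi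
      simpa [hv] using hM t (Ioc_subset_Icc_self ht)
    · simp [hv, if_neg hi, hMnonneg]
  have hZ := hP v hvmem
  have hCont : ∀ a b, ContinuousOn (fun t => ψ t * C i₀ t a b) (Icc 0 T) :=
    fun a b => hψc.mul (hC i₀ a b)
  have hint' : ∀ a b, IntervalIntegrable (fun t => ψ t * C i₀ t a b) volume 0 T := by
    intro a b
    apply ContinuousOn.intervalIntegrable
    rw [uIcc_of_le hT.le]
    exact hCont a b
  have hcoll : ∀ a b : Fin m ⊕ Fin m,
      (∑ i, ∫ t in (0:ℝ)..T, v t i * C i t a b) = ∫ t in (0:ℝ)..T, ψ t * C i₀ t a b := by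
    intro a b
    rw [Finset.sum_eq_single i₀]
    · simp [hv]
    · intro i _ hi
      simp [hv, if_neg hi]
    · intro h; exact absurd (Finset.mem_univ i₀) h
  rw [trace_form] at hZ
  simp only [Matrix.of_apply] at hZ
  simp only [hcoll] at hZ
  have hswap := hswap_lemma P ψ (C i₀) (fun t => trace_form P (C i₀ t)) hint'
  rw [hZ] at hswap
  exact fun t ht => eq_zero_of_integral_sq hT hψc hswap t ht

noncomputable def traceCLM {m : ℕ} (Q R : Mat m) : Mat m →L[ℝ] ℝ :=
  LinearMap.toContinuousLinearMap
    { toFun := fun X => Matrix.trace (Q * (R * X))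
      map_add' := fun X Y => by
        show Matrix.trace (Q * (R * (X + Y)))
          = Matrix.trace (Q * (R * X)) + Matrix.trace (Q * (R * Y))
        rw [Matrix.mul_add, Matrix.mul_add, Matrix.trace_add]
      map_smul' := fun c X => by
        show Matrix.trace (Q * (R * (c • X))) = c • Matrix.trace (Q * (R * X))
        rw [Matrix.mul_smul, Matrix.mul_smul, Matrix.trace_smul] }

/-- **Lemma `LEM20sept1`**: if `P` is orthogonal (for the trace inner product) to the image
of the differential at `u ≡ 0` of the End-Point mapping, i.e.
`tr[Pᵀ S(T) Σ_i ∫₀ᵀ v_i(t) S(t)⁻¹ B_i S(t) dt] = 0` for every `v ∈ L²([0,T];ℝᵏ)`, then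
`tr[Pᵀ S(T) S(t)⁻¹ B_i^j(t) S(t)] = 0` for every `t ∈ [0,T]`, every `j ≥ 0` and every `i`. -/
theorem trace_orthogonality {m k : ℕ} (T : ℝ) (hT : 0 < T)
    (A : ℝ → Mat m) (B : Fin k → Mat m)
    (hA : ∀ a b, ContDiffOn ℝ (⊤ : ℕ∞) (fun t => A t a b) (Set.Icc 0 T))
    (S : ℝ → Mat m) (hS0 : S 0 = 1)
    (hS : ∀ t ∈ Set.Icc (0 : ℝ) T, ∀ a b,
      HasDerivWithinAt (fun r => S r a b) ((A t * S t) a b) (Set.Icc 0 T) t)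
    (P : Mat m)
    (hP : ∀ v : ℝ → Fin k → ℝ, MemLp v 2 (volume.restrict (Set.Ioc 0 T)) →
      Matrix.trace (Pᵀ *
        Matrix.of (fun a b =>
          ∑ i, ∫ t in (0 : ℝ)..T, v t i * (S T * ((S t)⁻¹ * B i * S t)) a b)) = 0) :
    ∀ t ∈ Set.Icc (0 : ℝ) T, ∀ (j : ℕ) (i : Fin k),
      Matrix.trace (Pᵀ * (S T * ((S t)⁻¹ * Bseq T A (B i) j t * S t))) = 0 := by
  have hIcc : UniqueDiffOn ℝ (Set.Icc (0:ℝ) T) := uniqueDiffOn_Icc hT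
  have hAc : ∀ a b, ContinuousOn (fun t => A t a b) (Icc 0 T) :=
    fun a b => (hA a b).continuousOn
  have hdet := det_ne_zero hT hAc hS0 hS
  have hU : ∀ t ∈ Icc (0:ℝ) T, IsUnit ((S t).det) :=
    fun t ht => isUnit_iff_ne_zero.2 (hdet t ht)
  have hSd : ∀ t ∈ Icc (0:ℝ) T, HasDerivWithinAt S (A t * S t) (Icc 0 T) t :=
    fun t ht => hasDerivWithinAt_mat (hS t ht)
  have hGd := inv_hasDeriv hT hU hSd
  have hSc : ContinuousOn S (Icc 0 T) := fun t ht => (hSd t ht).continuousWithinAt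
  have hGc : ContinuousOn (fun r => (S r)⁻¹) (Icc 0 T) :=
    fun t ht => (hGd t ht).continuousWithinAt
  -- smoothness of the Bseq entries
  have hBsmooth : ∀ (i : Fin k) (j : ℕ) a b,
      ContDiffOn ℝ (⊤:ℕ∞) (fun t => Bseq T A (B i) j t a b) (Icc 0 T) := by
    intro i j
    induction j with
    | zero => intro a b; exact contDiffOn_const
    | succ j ih =>
      intro a b
      have hrw : (fun t => Bseq T A (B i) (j+1) t a b) = fun t =>
          (derivWithin (fun r => Bseq T A (B i) j r a b) (Icc 0 T) t)
          + ((∑ c, Bseq T A (B i) j t a c * A t c b)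
            - (∑ c, A t a c * Bseq T A (B i) j t c b)) := by
        funext t
        show ((Matrix.of fun a' b' =>
            derivWithin (fun r => Bseq T A (B i) j r a' b') (Set.Icc 0 T) t)
          + (Bseq T A (B i) j t * A t - A t * Bseq T A (B i) j t)) a b = _
        simp [Matrix.mul_apply]
      rw [hrw]
      refine ContDiffOn.add ?_ (ContDiffOn.sub ?_ ?_)
      · exact (ih a b).derivWithin hIcc (by simp)
      · exact ContDiffOn.sum fun c _ => (ih a c).mul (hA c b)
      · exact ContDiffOn.sum fun c _ => (hA a c).mul (ih c b)
  -- matrix-level derivative of Bseq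
  have hBd : ∀ (i : Fin k) (j : ℕ), ∀ t ∈ Icc (0:ℝ) T,
      HasDerivWithinAt (fun r => Bseq T A (B i) j r)
        (Matrix.of fun a b => derivWithin (fun r => Bseq T A (B i) j r a b) (Icc 0 T) t)
        (Icc 0 T) t := by
    intro i j t ht
    apply hasDerivWithinAt_mat
    intro a b
    exact (((hBsmooth i j a b).differentiableOn (by simp)) t ht).hasDerivWithinAt
  -- derivative of F j := S⁻¹ Bⱼ S
  have hFd : ∀ (i : Fin k) (j : ℕ), ∀ t ∈ Icc (0:ℝ) T,
      HasDerivWithinAt (fun r => (S r)⁻¹ * Bseq T A (B i) j r * S r)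
        ((S t)⁻¹ * Bseq T A (B i) (j+1) t * S t) (Icc 0 T) t := by
    intro i j t ht
    have h1 := ((hGd t ht).mul (hBd i j t ht)).mul (hSd t ht)
    refine h1.congr_deriv ?_
    have hsucc : Bseq T A (B i) (j+1) t =
        (Matrix.of fun a b => derivWithin (fun r => Bseq T A (B i) j r a b) (Icc 0 T) t)
        + (Bseq T A (B i) j t * A t - A t * Bseq T A (B i) j t) := rfl
    rw [hsucc]
    simp only [Pi.mul_apply]
    noncomm_ring
  -- the scalar functions
  have hφd : ∀ (i : Fin k) (j : ℕ), ∀ t ∈ Icc (0:ℝ) T,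
      HasDerivWithinAt
        (fun r => Matrix.trace (Pᵀ * (S T * ((S r)⁻¹ * Bseq T A (B i) j r * S r))))
        (Matrix.trace (Pᵀ * (S T * ((S t)⁻¹ * Bseq T A (B i) (j+1) t * S t))))
        (Icc 0 T) t := by
    intro i j t ht
    exact ((traceCLM Pᵀ (S T)).hasFDerivAt.comp_hasDerivWithinAt t (hFd i j t ht) :)
  -- induction
  have hmain : ∀ (i : Fin k) (j : ℕ), ∀ t ∈ Icc (0:ℝ) T,
      Matrix.trace (Pᵀ * (S T * ((S t)⁻¹ * Bseq T A (B i) j t * S t))) = 0 := by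
    intro i j
    induction j with
    | zero =>
      have hCm : ∀ i : Fin k,
          ContinuousOn (fun t => S T * ((S t)⁻¹ * B i * S t)) (Icc 0 T) := fun i =>
        continuousOn_const.mul ((hGc.mul continuousOn_const).mul hSc)
      have hC : ∀ (i : Fin k) a b,
          ContinuousOn (fun t => (S T * ((S t)⁻¹ * B i * S t)) a b) (Icc 0 T) := fun i a b =>
        (entryCLM m a b).continuous.comp_continuousOn (hCm i)
      have := base_case hT P (fun i t => S T * ((S t)⁻¹ * B i * S t)) hC hP i
      exact this
    | succ j ih =>
      intro t ht
      have hzero : HasDerivWithinAt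
          (fun r => Matrix.trace (Pᵀ * (S T * ((S r)⁻¹ * Bseq T A (B i) j r * S r))))
          0 (Icc 0 T) t :=
        (hasDerivWithinAt_const t (Icc (0:ℝ) T) (0:ℝ)).congr
          (fun r hr => ih r hr) (ih t ht)
      have h1 := (hφd i j t ht).derivWithin (hIcc t ht)
      have h2 := hzero.derivWithin (hIcc t ht)
      rw [← h1]
      exact h2
  exact fun t ht j i => hmain i j t ht

end Stmt5
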